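/- Let I and J be ideals of R with J proper and I contained in the radical of J. Then for every e ∈ ℕ, ν_I^J(p^{e+1}) ≥ p · ν_I^J(p^e). -/

import Mathlib

open Filter

/-- The `q`-th Frobenius power of an ideal `J`:
the ideal generated by the `q`-th powers of the elements of `J`. -/
def frobeniusPower {R : Type*} [CommSemiring R] (J : Ideal R) (q : ℕ) : Ideal R :=
  Ideal.span ((· ^ q) '' (J : Set R))

/-- `ν_I^J(p^e)`, the largest `n` with `I ^ n ⊄ J^{[p^e]}` (and `0` if there is no
such `n`). -/
noncomputable def nuIJ (p : ℕ) {R : Type*} [CommSemiring R] (I J : Ideal R) (e : ℕ) : ℕ :=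
  sSup {n : ℕ | ¬ I ^ n ≤ frobeniusPower J (p ^ e)}

section Aux

variable (p : ℕ) [Fact p.Prime] {K : Type*} [Field K] [CharP K p] [PerfectRing K p] {m : ℕ}

lemma pSmul_injective : Function.Injective (fun β : Fin m →₀ ℕ => p • β) := by
  intro β γ h
  ext i
  have := DFunLike.congr_fun h i
  simp only [Finsupp.smul_apply, smul_eq_mul] at this
  exact Nat.eq_of_mul_eq_mul_left (Fact.out : p.Prime).pos this

/-- "p-th root on the p-divisible part": the additive map with
`coeff β (rho p f) = (coeff (p • β) f)^(1/p)`. -/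
noncomputable def rho (f : MvPolynomial (Fin m) K) : MvPolynomial (Fin m) K :=
  AddMonoidAlgebra.ofCoeff (Finsupp.mapRange (frobeniusEquiv K p).symm (map_zero _)
    (Finsupp.comapDomain (fun β : Fin m →₀ ℕ => p • β) (AddMonoidAlgebra.coeff f) (pSmul_injective p).injOn))

lemma coeff_rho (f : MvPolynomial (Fin m) K) (β : Fin m →₀ ℕ) :
    MvPolynomial.coeff β (rho p f) = (frobeniusEquiv K p).symm (MvPolynomial.coeff (p • β) f) := by
  rfl

lemma rho_add (f g : MvPolynomial (Fin m) K) : rho p (f + g) = rho p f + rho p g := by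
  apply MvPolynomial.ext
  intro β
  simp [coeff_rho, MvPolynomial.coeff_add, map_add]

lemma rho_pow_p (a : MvPolynomial (Fin m) K) : rho p (a ^ p) = a := by
  induction a using MvPolynomial.induction_on' with
  | monomial d c =>
    rw [MvPolynomial.monomial_pow]
    apply MvPolynomial.ext
    intro β
    classical
    rw [coeff_rho, MvPolynomial.coeff_monomial, MvPolynomial.coeff_monomial]
    by_cases h : d = β
    · subst h; simp [frobenius_def]
    · rw [if_neg h, if_neg fun hc => h (pSmul_injective p hc), map_zero]
  | add f g hf hg =>
    rw [add_pow_char, rho_add, hf, hg]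

lemma rho_monomial_not_dvd {d : Fin m →₀ ℕ} (hd : ¬ ∃ d', d = p • d') (s : K) :
    rho p (MvPolynomial.monomial d s) = 0 := by
  apply MvPolynomial.ext
  intro β
  classical
  rw [coeff_rho, MvPolynomial.coeff_monomial, if_neg fun hc => hd ⟨β, hc⟩, map_zero,
    MvPolynomial.coeff_zero]

lemma rho_frobenius_mul (b r : MvPolynomial (Fin m) K) : rho p (b ^ p * r) = b * rho p r := by
  induction r using MvPolynomial.induction_on' with
  | monomial d s =>
    by_cases hd : ∃ d', d = p • d'
    · obtain ⟨d', rfl⟩ := hd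
      have hs : MvPolynomial.monomial (p • d') s
          = (MvPolynomial.monomial d' ((frobeniusEquiv K p).symm s)) ^ p := by
        rw [MvPolynomial.monomial_pow]
        congr 1
        have := frobenius_apply_frobeniusEquiv_symm K p s
        rw [frobenius_def] at this
        exact this.symm
      rw [hs, ← mul_pow, rho_pow_p, rho_pow_p]
    · rw [rho_monomial_not_dvd p hd, mul_zero]
      -- show `rho p (b ^ p * monomial d s) = 0` by induction on `b`
      induction b using MvPolynomial.induction_on' with
      | monomial γ c =>
        rw [MvPolynomial.monomial_pow, MvPolynomial.monomial_mul]
        apply rho_monomial_not_dvd p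
        rintro ⟨e, he⟩
        apply hd
        refine ⟨e - γ, ?_⟩
        ext i
        have hi := DFunLike.congr_fun he i
        simp only [Finsupp.add_apply, Finsupp.smul_apply, smul_eq_mul] at hi ⊢
        have hp0 : 0 < p := (Fact.out : p.Prime).pos
        have hγe : γ i ≤ e i := by
          have hle : p * γ i ≤ p * e i := by omega
          exact Nat.le_of_mul_le_mul_left hle hp0
        have key : p * γ i + p * (e i - γ i) = p * e i := by
          rw [← Nat.mul_add, Nat.add_sub_cancel' hγe]
        simp only [Finsupp.tsub_apply]
        omega
      | add b₁ b₂ h₁ h₂ =>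
        rw [add_pow_char, add_mul, rho_add, h₁, h₂, add_zero]
  | add f g hf hg =>
    rw [mul_add, rho_add, hf, hg, rho_add, mul_add]

lemma mem_of_frobenius_mem (J' : Ideal (MvPolynomial (Fin m) K))
    {a : MvPolynomial (Fin m) K} (h : a ^ p ∈ frobeniusPower J' p) : a ∈ J' := by
  have key : ∀ g ∈ frobeniusPower J' p, ∀ r, rho p (r * g) ∈ J' := by
    intro g hg
    refine Submodule.span_induction ?_ ?_ ?_ ?_ hg
    · rintro x ⟨f, hf, rfl⟩ r
      rw [mul_comm, rho_frobenius_mul]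
      exact Ideal.mul_mem_right _ _ hf
    · intro r
      rw [mul_zero]
      have : (rho p 0 : MvPolynomial (Fin m) K) = 0 := by
        have := rho_add p (0 : MvPolynomial (Fin m) K) 0
        simpa using this.symm
      rw [this]; exact zero_mem _
    · intro x y _ _ hx hy r
      rw [mul_add, rho_add]
      exact add_mem (hx r) (hy r)
    · intro c x _ hx r
      rw [smul_eq_mul, ← mul_assoc]
      exact hx (r * c)
  have := key _ h 1
  rwa [one_mul, rho_pow_p] at this

end Aux

/-- For ideals `I ⊆ √J` with `J` proper, `ν_I^J(p^{e+1}) ≥ p · ν_I^J(p^e)` for every `e`. -/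
theorem nuIJ_succ_ge_p_mul_nuIJ
    (p : ℕ) (hp : p.Prime) (K : Type*) [Field K] [Fintype K] [CharP K p]
    (m : ℕ) (I J : Ideal (MvPolynomial (Fin m) K))
    (hJ : J ≠ ⊤) (hIJ : I ≤ J.radical) :
    ∀ e : ℕ, p * nuIJ p I J e ≤ nuIJ p I J (e + 1) := by
  haveI : Fact p.Prime := ⟨hp⟩
  intro e
  -- boundedness of the defining sets
  have hbdd : ∀ e' : ℕ, BddAbove {n : ℕ | ¬ I ^ n ≤ frobeniusPower J (p ^ e')} := by
    intro e'
    set Q := frobeniusPower J (p ^ e') with hQ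
    have hJQ : J ≤ Q.radical := by
      intro f hf
      exact ⟨p ^ e', Ideal.subset_span ⟨f, hf, rfl⟩⟩
    have hIQ : I ≤ Q.radical := le_trans hIJ <| by
      calc J.radical ≤ Q.radical.radical := Ideal.radical_mono hJQ
        _ = Q.radical := Q.radical_idem
    obtain ⟨k, hk⟩ := Ideal.exists_radical_pow_le_of_fg Q (IsNoetherian.noetherian _)
    have hIk : I ^ k ≤ Q := le_trans (Ideal.pow_right_mono hIQ k) hk
    refine ⟨k, fun n hn => ?_⟩
    by_contra hlt
    push_neg at hlt
    exact hn (le_trans (Ideal.pow_le_pow_right (le_of_lt hlt)) hIk)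
  by_cases hne : {n : ℕ | ¬ I ^ n ≤ frobeniusPower J (p ^ e)}.Nonempty
  · have hmem := Nat.sSup_mem hne (hbdd e)
    set n := sSup {n : ℕ | ¬ I ^ n ≤ frobeniusPower J (p ^ e)} with hn
    obtain ⟨a, haI, haQ⟩ := SetLike.not_le_iff_exists.mp hmem
    have : p * n ∈ {n : ℕ | ¬ I ^ n ≤ frobeniusPower J (p ^ (e + 1))} := by
      intro hle
      have hap : a ^ p ∈ I ^ (p * n) := by
        rw [mul_comm, pow_mul]
        exact Ideal.pow_mem_pow haI p
      have h1 : a ^ p ∈ frobeniusPower J (p ^ (e + 1)) := hle hap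
      have h2 : frobeniusPower J (p ^ (e + 1)) ≤
          frobeniusPower (frobeniusPower J (p ^ e)) p := by
        rw [frobeniusPower, Ideal.span_le]
        rintro x ⟨f, hf, rfl⟩
        dsimp only
        rw [pow_succ, pow_mul]
        exact Ideal.subset_span ⟨f ^ p ^ e, Ideal.subset_span ⟨f, hf, rfl⟩, rfl⟩
      exact haQ (mem_of_frobenius_mem p _ (h2 h1))
    exact le_csSup (hbdd (e + 1)) this
  · rw [Set.not_nonempty_iff_eq_empty] at hne
    simp [nuIJ, hne]
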